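/- Let v, w, S be periodic grid functions satisfying w_p = (δ_xx v)_p − (h²/12)(δ_xx w)_p + S_p for all p ∈ ℤ. Then ⟨Δ_x w, v⟩ = (h²/12)⟨Δ_x w, S⟩ + ⟨Δ_x S, v⟩. -/
import Mathlib


open Finset

/-- A periodic grid function with period `M`. -/
def Periodic (M : ℕ) (w : ℤ → ℝ) : Prop := ∀ p : ℤ, w (p + (M : ℤ)) = w p

/-- Discrete inner product `⟨v,w⟩ = h ∑_{p=1}^M v_p w_p`. -/
noncomputable def ip (M : ℕ) (h : ℝ) (v w : ℤ → ℝ) : ℝ :=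
  h * ∑ p ∈ Finset.Icc (1 : ℤ) (M : ℤ), v p * w p

/-- Discrete L² norm `‖w‖ = √⟨w,w⟩`. -/
noncomputable def nrm (M : ℕ) (h : ℝ) (w : ℤ → ℝ) : ℝ := Real.sqrt (ip M h w w)

/-- Discrete H¹ seminorm `|w|₁`. -/
noncomputable def snorm1 (M : ℕ) (h : ℝ) (w : ℤ → ℝ) : ℝ :=
  Real.sqrt (h * ∑ p ∈ Finset.Icc (1 : ℤ) (M : ℤ), ((w p - w (p - 1)) / h) ^ 2)

/-- Centered difference operator `(Δ_x w)_p = (w_{p+1} − w_{p−1})/(2h)`. -/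
noncomputable def Dx (h : ℝ) (w : ℤ → ℝ) : ℤ → ℝ :=
  fun p => (w (p + 1) - w (p - 1)) / (2 * h)

/-- Second difference operator `(δ_xx w)_p = (w_{p+1} − 2w_p + w_{p−1})/h²`. -/
noncomputable def Dxx (h : ℝ) (w : ℤ → ℝ) : ℤ → ℝ :=
  fun p => (w (p + 1) - 2 * w p + w (p - 1)) / h ^ 2

/-- Discrete nonlinear operator `Ψ(v,w)_p = (1/3)(v_p (Δ_x w)_p + (Δ_x (vw))_p)`. -/
noncomputable def Psi (h : ℝ) (v w : ℤ → ℝ) : ℤ → ℝ :=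
  fun p => (1 / 3) * (v p * Dx h w p + Dx h (fun q => v q * w q) p)

lemma sum_shift (M : ℕ) (hM : 3 ≤ M) (f : ℤ → ℝ) (hf : Periodic M f) :
    ∑ p ∈ Icc (1:ℤ) (M:ℤ), f (p + 1) = ∑ p ∈ Icc (1:ℤ) (M:ℤ), f p := by
  have h1 : ∑ p ∈ Icc (1:ℤ) (M:ℤ), f (p + 1) = ∑ p ∈ Icc (2:ℤ) ((M:ℤ)+1), f p := by
    rw [show Icc (2:ℤ) ((M:ℤ)+1) = (Icc (1:ℤ) (M:ℤ)).map (addRightEmbedding 1) by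
      rw [Finset.map_add_right_Icc]; norm_num]
    rw [Finset.sum_map]; rfl
  have hM' : (3:ℤ) ≤ (M:ℤ) := by exact_mod_cast hM
  have e1 : Icc (1:ℤ) ((M:ℤ)+1) = insert ((M:ℤ)+1) (Icc 1 (M:ℤ)) := by
    ext x; simp [Finset.mem_Icc]; omega
  have e2 : Icc (1:ℤ) ((M:ℤ)+1) = insert (1:ℤ) (Icc 2 ((M:ℤ)+1)) := by
    ext x; simp [Finset.mem_Icc]; omega
  have n1 : ((M:ℤ)+1) ∉ Icc (1:ℤ) (M:ℤ) := by simp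
  have n2 : (1:ℤ) ∉ Icc (2:ℤ) ((M:ℤ)+1) := by simp [Finset.mem_Icc]
  have key : f ((M:ℤ)+1) + ∑ p ∈ Icc (1:ℤ) (M:ℤ), f p
      = f 1 + ∑ p ∈ Icc (2:ℤ) ((M:ℤ)+1), f p := by
    rw [← Finset.sum_insert n1, ← Finset.sum_insert n2, ← e1, ← e2]
  have hfM : f ((M:ℤ)+1) = f 1 := by rw [show (M:ℤ)+1 = 1 + (M:ℤ) by ring, hf 1]
  rw [h1]; linarith

lemma sum_shift' (M : ℕ) (hM : 3 ≤ M) (f : ℤ → ℝ) (hf : Periodic M f) :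
    ∑ p ∈ Icc (1:ℤ) (M:ℤ), f (p - 1) = ∑ p ∈ Icc (1:ℤ) (M:ℤ), f p := by
  have := sum_shift M hM (fun p => f (p - 1))
    (fun p => by simp only []; rw [show p + (M:ℤ) - 1 = p - 1 + (M:ℤ) by ring, hf])
  simp only [add_sub_cancel_right] at this
  rw [← this]

lemma per_Dx (M : ℕ) (h : ℝ) (f : ℤ → ℝ) (hf : Periodic M f) : Periodic M (Dx h f) := fun p => by
  simp only [Dx]
  rw [show p + (M:ℤ) + 1 = (p+1) + (M:ℤ) by ring, show p + (M:ℤ) - 1 = (p-1) + (M:ℤ) by ring,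
    hf, hf]

lemma per_Dxx (M : ℕ) (h : ℝ) (f : ℤ → ℝ) (hf : Periodic M f) : Periodic M (Dxx h f) := fun p => by
  simp only [Dxx]
  rw [show p + (M:ℤ) + 1 = (p+1) + (M:ℤ) by ring, show p + (M:ℤ) - 1 = (p-1) + (M:ℤ) by ring,
    hf, hf, hf]

lemma ip_comm (M : ℕ) (h : ℝ) (a b : ℤ → ℝ) : ip M h a b = ip M h b a := by
  simp [ip, mul_comm]

lemma sum_prod_shift (M : ℕ) (hM : 3 ≤ M) (a b : ℤ → ℝ) (ha : Periodic M a) (hb : Periodic M b) :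
    ∑ p ∈ Icc (1:ℤ) (M:ℤ), a (p+1) * b p = ∑ p ∈ Icc (1:ℤ) (M:ℤ), a p * b (p-1) := by
  have := sum_shift' M hM (fun p => a (p+1) * b p)
    (fun p => by simp only []; rw [show p + (M:ℤ) + 1 = (p+1)+(M:ℤ) by ring, ha, hb])
  simp only [sub_add_cancel] at this
  rw [← this]

lemma sum_prod_shift2 (M : ℕ) (hM : 3 ≤ M) (a b : ℤ → ℝ) (ha : Periodic M a) (hb : Periodic M b) :
    ∑ p ∈ Icc (1:ℤ) (M:ℤ), a (p-1) * b p = ∑ p ∈ Icc (1:ℤ) (M:ℤ), a p * b (p+1) := by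
  have := sum_shift M hM (fun p => a (p-1) * b p)
    (fun p => by simp only []; rw [show p + (M:ℤ) - 1 = (p-1)+(M:ℤ) by ring, ha, hb])
  simp only [add_sub_cancel_right] at this
  rw [← this]

lemma sum_Dx_mul (M : ℕ) (h : ℝ) (a b : ℤ → ℝ) :
    ∑ p ∈ Icc (1:ℤ) (M:ℤ), Dx h a p * b p
      = ((∑ p ∈ Icc (1:ℤ) (M:ℤ), a (p+1) * b p) - ∑ p ∈ Icc (1:ℤ) (M:ℤ), a (p-1) * b p)
          / (2*h) := by
  rw [← Finset.sum_sub_distrib, Finset.sum_div]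
  exact Finset.sum_congr rfl fun p _ => by simp only [Dx]; ring

lemma sum_mul_Dx (M : ℕ) (h : ℝ) (a b : ℤ → ℝ) :
    ∑ p ∈ Icc (1:ℤ) (M:ℤ), a p * Dx h b p
      = ((∑ p ∈ Icc (1:ℤ) (M:ℤ), a p * b (p+1)) - ∑ p ∈ Icc (1:ℤ) (M:ℤ), a p * b (p-1))
          / (2*h) := by
  rw [← Finset.sum_sub_distrib, Finset.sum_div]
  exact Finset.sum_congr rfl fun p _ => by simp only [Dx]; ring

lemma ip_anti (M : ℕ) (hM : 3 ≤ M) (h : ℝ) (a b : ℤ → ℝ) (ha : Periodic M a)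
    (hb : Periodic M b) : ip M h (Dx h a) b = - ip M h a (Dx h b) := by
  simp only [ip]
  rw [sum_Dx_mul, sum_mul_Dx, sum_prod_shift M hM a b ha hb, sum_prod_shift2 M hM a b ha hb]
  ring

lemma sum_Dxx_mul (M : ℕ) (h : ℝ) (a b : ℤ → ℝ) :
    ∑ p ∈ Icc (1:ℤ) (M:ℤ), Dxx h a p * b p
      = ((∑ p ∈ Icc (1:ℤ) (M:ℤ), a (p+1) * b p) - 2 * (∑ p ∈ Icc (1:ℤ) (M:ℤ), a p * b p)
          + ∑ p ∈ Icc (1:ℤ) (M:ℤ), a (p-1) * b p) / h^2 := by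
  rw [Finset.mul_sum, ← Finset.sum_sub_distrib, ← Finset.sum_add_distrib, Finset.sum_div]
  exact Finset.sum_congr rfl fun p _ => by simp only [Dxx]; ring

lemma sum_mul_Dxx (M : ℕ) (h : ℝ) (a b : ℤ → ℝ) :
    ∑ p ∈ Icc (1:ℤ) (M:ℤ), a p * Dxx h b p
      = ((∑ p ∈ Icc (1:ℤ) (M:ℤ), a p * b (p+1)) - 2 * (∑ p ∈ Icc (1:ℤ) (M:ℤ), a p * b p)
          + ∑ p ∈ Icc (1:ℤ) (M:ℤ), a p * b (p-1)) / h^2 := by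
  rw [Finset.mul_sum, ← Finset.sum_sub_distrib, ← Finset.sum_add_distrib, Finset.sum_div]
  exact Finset.sum_congr rfl fun p _ => by simp only [Dxx]; ring

lemma ip_sym (M : ℕ) (hM : 3 ≤ M) (h : ℝ) (a b : ℤ → ℝ) (ha : Periodic M a)
    (hb : Periodic M b) : ip M h (Dxx h a) b = ip M h a (Dxx h b) := by
  simp only [ip]
  rw [sum_Dxx_mul, sum_mul_Dxx, sum_prod_shift M hM a b ha hb, sum_prod_shift2 M hM a b ha hb]
  ring

lemma Dx_Dxx_comm (h : ℝ) (f : ℤ → ℝ) : Dx h (Dxx h f) = Dxx h (Dx h f) := by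
  funext p
  simp only [Dx, Dxx]
  rw [show p + 1 + 1 = p + 2 by ring, show p + 1 - 1 = p by ring,
    show p - 1 + 1 = p by ring, show p - 1 - 1 = p - 2 by ring]
  ring

lemma ip_Dx_self (M : ℕ) (hM : 3 ≤ M) (h : ℝ) (a : ℤ → ℝ) (ha : Periodic M a) :
    ip M h (Dx h a) a = 0 := by
  have h1 := ip_anti M hM h a a ha ha
  have h2 := ip_comm M h a (Dx h a)
  linarith

lemma ip_congr (M : ℕ) (h : ℝ) (a a' b : ℤ → ℝ) (hx : ∀ p, a p = a' p) :
    ip M h a b = ip M h a' b := by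
  simp only [ip]; congr 1; exact Finset.sum_congr rfl fun p _ => by rw [hx]

lemma ip_split (M : ℕ) (h c : ℝ) (x y z b : ℤ → ℝ) :
    ip M h (fun p => x p - c * y p + z p) b
      = ip M h x b - c * ip M h y b + ip M h z b := by
  simp only [ip]
  have key : ∑ p ∈ Icc (1:ℤ) (M:ℤ), (x p - c * y p + z p) * b p
      = (∑ p ∈ Icc (1:ℤ) (M:ℤ), x p * b p) - c * (∑ p ∈ Icc (1:ℤ) (M:ℤ), y p * b p)
        + ∑ p ∈ Icc (1:ℤ) (M:ℤ), z p * b p := by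
    rw [Finset.mul_sum, ← Finset.sum_sub_distrib, ← Finset.sum_add_distrib]
    exact Finset.sum_congr rfl fun p _ => by ring
  rw [key]; ring

lemma ip_split' (M : ℕ) (h c : ℝ) (a u y s : ℤ → ℝ) :
    ip M h a (fun p => u p + c * y p - s p)
      = ip M h a u + c * ip M h a y - ip M h a s := by
  simp only [ip]
  have key : ∑ p ∈ Icc (1:ℤ) (M:ℤ), a p * (u p + c * y p - s p)
      = (∑ p ∈ Icc (1:ℤ) (M:ℤ), a p * u p) + c * (∑ p ∈ Icc (1:ℤ) (M:ℤ), a p * y p)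
        - ∑ p ∈ Icc (1:ℤ) (M:ℤ), a p * s p := by
    rw [Finset.mul_sum, ← Finset.sum_add_distrib, ← Finset.sum_sub_distrib]
    exact Finset.sum_congr rfl fun p _ => by ring
  rw [key]; ring

/-- if `w = δ_xx v − (h²/12) δ_xx w + S` then
`⟨Δ_x w, v⟩ = (h²/12)⟨Δ_x w, S⟩ + ⟨Δ_x S, v⟩`. -/
theorem stmt_10 (M : ℕ) (hM : 3 ≤ M) (h : ℝ) (hh : 0 < h) (L : ℝ) (hL : L = M * h)
    (v w S : ℤ → ℝ) (hv : Periodic M v) (hw : Periodic M w) (hS : Periodic M S)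
    (hrel : ∀ p : ℤ, w p = Dxx h v p - h ^ 2 / 12 * Dxx h w p + S p) :
    ip M h (Dx h w) v = h ^ 2 / 12 * ip M h (Dx h w) S + ip M h (Dx h S) v := by
  have hDxv := per_Dx M h v hv
  have hDxw := per_Dx M h w hw
  have hDxxv := per_Dxx M h v hv
  have hDxxw := per_Dxx M h w hw
  -- Dx w decomposes
  have hdx : ∀ p, Dx h w p = Dx h (Dxx h v) p - h ^ 2 / 12 * Dx h (Dxx h w) p + Dx h S p := by
    intro p
    have e : Dx h w p = Dx h (fun q => Dxx h v q - h ^ 2 / 12 * Dxx h w q + S q) p := by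
      simp only [Dx]
      rw [hrel (p+1), hrel (p-1)]
    rw [e]
    simp only [Dx]
    ring
  have split1 : ip M h (Dx h w) v
      = ip M h (Dx h (Dxx h v)) v - h ^ 2 / 12 * ip M h (Dx h (Dxx h w)) v
        + ip M h (Dx h S) v := by
    rw [ip_congr M h (Dx h w) (fun p => Dx h (Dxx h v) p - h ^ 2 / 12 * Dx h (Dxx h w) p + Dx h S p) v hdx]
    exact ip_split M h _ _ _ _ _
  -- term 1 is zero
  have t1 : ip M h (Dx h (Dxx h v)) v = 0 := by
    have a1 := ip_anti M hM h (Dxx h v) v hDxxv hv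
    have a2 := ip_sym M hM h v (Dx h v) hv hDxv
    have a3 := ip_comm M h v (Dxx h (Dx h v))
    have a4 : ip M h (Dxx h (Dx h v)) v = ip M h (Dx h (Dxx h v)) v := by
      rw [Dx_Dxx_comm]
    linarith
  -- term 2
  have t2 : ip M h (Dx h (Dxx h w)) v = - ip M h (Dx h w) S := by
    have c1 : ip M h (Dx h (Dxx h w)) v = ip M h (Dx h w) (Dxx h v) := by
      rw [Dx_Dxx_comm, ip_sym M hM h (Dx h w) v hDxw hv]
    have hxx : ∀ p, Dxx h v p = w p + h ^ 2 / 12 * Dxx h w p - S p := by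
      intro p; have := hrel p; linarith
    have c2 : ip M h (Dx h w) (Dxx h v)
        = ip M h (Dx h w) w + h ^ 2 / 12 * ip M h (Dx h w) (Dxx h w)
          - ip M h (Dx h w) S := by
      rw [ip_comm M h (Dx h w) (Dxx h v),
        ip_congr M h (Dxx h v) (fun p => w p + h ^ 2 / 12 * Dxx h w p - S p) (Dx h w) hxx,
        ip_comm M h _ (Dx h w), ip_split' M h _ _ _ _ _]
    have z1 : ip M h (Dx h w) w = 0 := ip_Dx_self M hM h w hw
    have z2 : ip M h (Dx h w) (Dxx h w) = 0 := by
      have b1 := ip_anti M hM h w (Dxx h w) hw hDxxw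
      have b2 : ip M h w (Dx h (Dxx h w)) = ip M h w (Dxx h (Dx h w)) := by
        rw [Dx_Dxx_comm]
      have b3 := ip_sym M hM h w (Dx h w) hw hDxw
      have b4 := ip_comm M h (Dxx h w) (Dx h w)
      linarith
    rw [c1, c2, z1, z2]; ring
  rw [t1, t2] at split1
  linear_combination split1
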